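/- For a closed Hermitian operator A and ε ≥ 0, one has the equality F(A², ε²) = F(A, ε). -/

import Mathlib

open InnerProductSpace RCLike Filter Topology MeasureTheory Set

variable {𝕜 E : Type*} [RCLike 𝕜] [NormedAddCommGroup E] [InnerProductSpace 𝕜 E]

local notation "⟪" x ", " y "⟫" => @inner 𝕜 _ _ x y

/-- `PowRel A n x y` means `x ∈ D(Aⁿ)` and `Aⁿ x = y`. -/
inductive PowRel (A : E →ₗ.[𝕜] E) : ℕ → E → E → Prop
  | zero (x : E) : PowRel A 0 x x
  | succ {n : ℕ} {x y : E} (h : PowRel A n x y) (hy : y ∈ A.domain) :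
      PowRel A (n + 1) x (A ⟨y, hy⟩)

/-- `F(A,λ)` for an unbounded operator. -/
def Fset (A : E →ₗ.[𝕜] E) (lam : ℝ) : Set E :=
  {x | ∀ n : ℕ, ∃ y : E, PowRel A n x y ∧ ‖y‖ ≤ lam ^ n * ‖x‖}

/-- orthogonal complement of a set -/
def ocompl (𝕜' : Type*) {E' : Type*} [RCLike 𝕜'] [NormedAddCommGroup E']
    [InnerProductSpace 𝕜' E'] (S : Set E') : Set E' :=
  {y | ∀ x ∈ S, (inner 𝕜' x y : 𝕜') = 0}

/-- Hermitian (symmetric) partially defined operator. -/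
def IsHermitianPMap (A : E →ₗ.[𝕜] E) : Prop :=
  ∀ x y : A.domain, ⟪A x, (y : E)⟫ = ⟪(x : E), A y⟫

/-- Self-adjoint partially defined operator (densely defined, symmetric, maximal). -/
def IsSelfAdjointPMap (A : E →ₗ.[𝕜] E) : Prop :=
  Dense (A.domain : Set E) ∧ IsHermitianPMap A ∧
    ∀ y z : E, (∀ x : A.domain, ⟪A x, y⟫ = ⟪(x : E), z⟫) →
      ∃ hy : y ∈ A.domain, A ⟨y, hy⟩ = z

/-- `F(T,λ)` for a bounded operator. -/
def FsetB (T : E →L[𝕜] E) (lam : ℝ) : Set E :=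
  {x | ∀ n : ℕ, ‖(T ^ n) x‖ ≤ lam ^ n * ‖x‖}

/-- Spectral family (resolution of the identity). -/
def IsSpectralFamily (P : ℝ → (E →L[𝕜] E)) : Prop :=
  (∀ t, IsIdempotentElem (P t)) ∧
  (∀ t x y, ⟪P t x, y⟫ = ⟪x, P t y⟫) ∧
  (∀ s t : ℝ, s ≤ t → ∀ x, P t (P s x) = P s x) ∧
  (∀ t x, Tendsto (fun s => P s x) (𝓝[>] t) (𝓝 (P t x))) ∧
  (∀ x, Tendsto (fun t => P t x) atBot (𝓝 (0 : E))) ∧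
  (∀ x, Tendsto (fun t => P t x) atTop (𝓝 x))

open Classical in
/-- Lebesgue–Stieltjes measure of a monotone right-continuous function (junk value otherwise). -/
noncomputable def stMeasure (f : ℝ → ℝ) : Measure ℝ :=
  if h : Monotone f ∧ ∀ x, ContinuousWithinAt f (Ici x) x then
    StieltjesFunction.measure ⟨f, h.1, h.2⟩ else 0

/-- `F(A², λ)`, where `A²` is the operator with domain `{x ∈ D(A) : A x ∈ D(A)}`;
its `n`-th power is `A^(2n)`. -/
def FsetSq (A : E →ₗ.[𝕜] E) (lam : ℝ) : Set E :=
  {x | ∀ n : ℕ, ∃ y : E, PowRel A (2 * n) x y ∧ ‖y‖ ≤ lam ^ n * ‖x‖}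

theorem powRel_unique {A : E →ₗ.[𝕜] E} {n : ℕ} {x y y' : E}
    (h : PowRel A n x y) (h' : PowRel A n x y') : y = y' := by
  induction h generalizing y' with
  | zero x => cases h'; rfl
  | succ h hy ih =>
    cases h' with
    | succ h2 hy2 =>
      have e := ih h2
      subst e
      rfl

theorem powRel_le {A : E →ₗ.[𝕜] E} {n : ℕ} {x y : E} (h : PowRel A n x y) :
    ∀ m ≤ n, ∃ z, PowRel A m x z := by
  induction h with
  | zero x =>
    intro m hm
    obtain rfl : m = 0 := Nat.le_zero.mp hm
    exact ⟨x, .zero x⟩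
  | @succ n x y h hy ih =>
    intro m hm
    rcases Nat.eq_or_lt_of_le hm with rfl | hlt
    · exact ⟨_, .succ h hy⟩
    · exact ih m (Nat.lt_succ_iff.mp hlt)

theorem powRel_key {A : E →ₗ.[𝕜] E} (hH : IsHermitianPMap A) {m : ℕ} {x z z1 z2 : E}
    (h0 : PowRel A m x z) (h1 : PowRel A (m + 1) x z1) (h2 : PowRel A (m + 2) x z2) :
    ‖z1‖ ^ 2 ≤ ‖z‖ * ‖z2‖ := by
  cases h2 with
  | @succ _ _ w h2' hw =>
    have e1 : w = z1 := powRel_unique h2' h1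
    subst e1
    cases h1 with
    | @succ _ _ u h1' hu =>
      have e0 : u = z := powRel_unique h1' h0
      subst e0
      have herm := hH ⟨u, hu⟩ ⟨A ⟨u, hu⟩, hw⟩
      have hns : ‖(A ⟨u, hu⟩ : E)‖ ^ 2
          = RCLike.re (⟪(A ⟨u, hu⟩ : E), (A ⟨u, hu⟩ : E)⟫ : 𝕜) := by
        rw [inner_self_eq_norm_sq]
      rw [hns, herm]
      calc RCLike.re (⟪u, A ⟨A ⟨u, hu⟩, hw⟩⟫ : 𝕜)
          ≤ ‖(⟪u, A ⟨A ⟨u, hu⟩, hw⟩⟫ : 𝕜)‖ := RCLike.re_le_norm _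
        _ ≤ ‖u‖ * ‖A ⟨A ⟨u, hu⟩, hw⟩‖ := norm_inner_le_norm _ _

theorem stmt3 (A : E →ₗ.[𝕜] E) (hA : A.IsClosed) (hH : IsHermitianPMap A)
    (ε : ℝ) (hε : 0 ≤ ε) :
    FsetSq A (ε ^ 2) = Fset A ε := by
  ext x
  constructor
  · intro hx n
    rcases Nat.even_or_odd n with ⟨k, rfl⟩ | ⟨k, rfl⟩
    · obtain ⟨y, hy, hb⟩ := hx k
      refine ⟨y, by rwa [show 2 * k = k + k by omega] at hy, ?_⟩
      calc ‖y‖ ≤ (ε ^ 2) ^ k * ‖x‖ := hb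
        _ = ε ^ (k + k) * ‖x‖ := by ring
    · obtain ⟨y0, hy0, hb0⟩ := hx k
      obtain ⟨y2, hy2, hb2⟩ := hx (k + 1)
      have h2' : PowRel A (2 * k + 2) x y2 := by rwa [show 2 * (k + 1) = 2 * k + 2 by omega] at hy2
      obtain ⟨y1, hy1⟩ := powRel_le h2' (2 * k + 1) (by omega)
      have key := powRel_key hH hy0 hy1 h2'
      have hle : ‖y1‖ ^ 2 ≤ (ε ^ (2 * k + 1) * ‖x‖) ^ 2 := by
        calc ‖y1‖ ^ 2 ≤ ‖y0‖ * ‖y2‖ := key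
          _ ≤ ((ε ^ 2) ^ k * ‖x‖) * ((ε ^ 2) ^ (k + 1) * ‖x‖) := by
              apply mul_le_mul hb0 hb2 (norm_nonneg _)
              positivity
          _ = (ε ^ (2 * k + 1) * ‖x‖) ^ 2 := by ring
      exact ⟨y1, hy1, by
        have h1 : ‖y1‖ ≤ ε ^ (2 * k + 1) * ‖x‖ := by
          have hnn : (0:ℝ) ≤ ε ^ (2 * k + 1) * ‖x‖ := by positivity
          nlinarith [norm_nonneg y1]
        exact h1⟩
  · intro hx n
    obtain ⟨y, hy, hb⟩ := hx (2 * n)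
    refine ⟨y, hy, ?_⟩
    calc ‖y‖ ≤ ε ^ (2 * n) * ‖x‖ := hb
      _ = (ε ^ 2) ^ n * ‖x‖ := by ring
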